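/- arXiv:1904.11609 — 5 statements merged into one kernel-verified Lean document; each statement's English description precedes it below -/
import Mathlib

section
/- Consider the two-level hierarchical model y | w ∼ f₁(y|w) and w | θ ∼ f₂(w|θ), where the top-level conditional density f₁(y|w) > 0 (with respect to a σ-finite measure μ) does not depend on θ ∈ Θ ⊆ ℝ open, and f₂(w|θ) > 0 is a family of probability densities (with respect to a σ-finite measure ν) such that θ ↦ log f₂(w|θ) is twice differentiable. Let f(y|θ) = ∫ f₁(y|w) f₂(w|θ) dν(w) be the marginal density and f(w|y,θ) = f₁(y|w) f₂(w|θ)/f(y|θ) the complete conditional. Assume differentiation under the integral sign is valid and all relevant negative second log-derivatives are integrable. Then I_y(θ) = I_w(θ) − E_y[I_w(θ|y)], where I_y(θ) = ∫ (−∂²/∂θ² log f(y|θ)) f(y|θ) dμ, I_w(θ) = ∫ (−∂²/∂θ² log f₂(w|θ)) f₂(w|θ) dν, and E_y[I_w(θ|y)] = ∫ (∫ (−∂²/∂θ² log f(w|y,θ)) f(w|y,θ) dν(w)) f(y|θ) dμ(y). In particular, if moreover E_y[I_w(θ|y)] ≥ 0 and I_y(θ) ≥ 0 for all θ ∈ Θ,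 then 0 ≤ I_y(θ) ≤ I_w(θ), and if the Jeffreys prior θ ↦ √(I_w(θ)) of the latent-variable model is integrable over Θ, then the Jeffreys prior θ ↦ √(I_y(θ)) of the marginal model is also integrable over Θ. -/
open MeasureTheory Filter Metric
open scoped ENNReal Topology

lemma aux_blowup {W : Type*} [MeasurableSpace W] (ν : Measure W)
    (Θ : Set ℝ) (hΘ : IsOpen Θ)
    (g : W → ℝ) (hg : ∀ w, 0 < g w) (hgm : Measurable g)
    (f₂ : ℝ → W → ℝ) (hf₂meas : ∀ t, Measurable (f₂ t))
    (hf₂pos : ∀ t ∈ Θ, ∀ w, 0 < f₂ t w)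
    (hf₂cont : ∀ w, ∀ t ∈ Θ, ContinuousAt (fun s => Real.log (f₂ s w)) t)
    (B : ℝ → ℝ) (hB : ∀ t, B t = ∫ w, g w * f₂ t w ∂ν)
    (t₀ : ℝ) (ht₀ : t₀ ∈ Θ)
    (hcont : ContinuousAt (fun t => Real.log (B t)) t₀)
    (hF : ∫⁻ w, ENNReal.ofReal (g w * f₂ t₀ w) ∂ν = ⊤) :
    ∃ δ > 0, Metric.ball t₀ δ ⊆ Θ ∧
      ∀ t ∈ Metric.ball t₀ δ, ∫⁻ w, ENNReal.ofReal (g w * f₂ t w) ∂ν = ⊤ := by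
  set Fn : ℝ → ℝ≥0∞ := fun t => ∫⁻ w, ENNReal.ofReal (g w * f₂ t w) ∂ν with hFn
  have hmeasFn : ∀ t, Measurable fun w => ENNReal.ofReal (g w * f₂ t w) :=
    fun t => (hgm.mul (hf₂meas t)).ennreal_ofReal
  have hBF : ∀ t, t ∈ Θ → B t = (Fn t).toReal := by
    intro t ht
    rw [hB t, integral_eq_lintegral_of_nonneg_ae
      (Filter.Eventually.of_forall fun w => (mul_pos (hg w) (hf₂pos t ht w)).le)
      (hgm.mul (hf₂meas t)).aestronglyMeasurable]
  have hB0 : Real.log (B t₀) = 0 := by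
    rw [hBF t₀ ht₀]
    simp only [hFn]
    rw [hF]
    simp
  obtain ⟨δ₁, hδ₁pos, hδ₁⟩ := Metric.continuousAt_iff.1 hcont 1 one_pos
  obtain ⟨δ₂, hδ₂pos, hδ₂⟩ := Metric.isOpen_iff.1 hΘ t₀ ht₀
  set C : ℝ≥0∞ := ENNReal.ofReal (Real.exp 2) with hC
  have key : ∃ δ₄ > 0, δ₄ ≤ min δ₁ δ₂ ∧ ∀ t ∈ ball t₀ δ₄, ¬ (Fn t ≤ C) := by
    by_contra hcon
    push_neg at hcon
    have hseq : ∀ n : ℕ, ∃ t, t ∈ ball t₀ (min (min δ₁ δ₂) ((n + 1 : ℝ)⁻¹)) ∧ Fn t ≤ C := by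
      intro n
      obtain ⟨t, ht, hle⟩ := hcon (min (min δ₁ δ₂) ((n + 1 : ℝ)⁻¹))
        (lt_min (lt_min hδ₁pos hδ₂pos) (by positivity)) (min_le_left _ _)
      exact ⟨t, ht, hle⟩
    choose t htb htle using hseq
    have htΘ : ∀ n, t n ∈ Θ :=
      fun n => hδ₂ (ball_subset_ball ((min_le_left _ _).trans (min_le_right δ₁ δ₂)) (htb n))
    have htt : Tendsto t atTop (𝓝 t₀) := by
      rw [tendsto_iff_dist_tendsto_zero]
      refine squeeze_zero (fun n => dist_nonneg)
        (fun n => ((mem_ball.1 (htb n)).trans_le (min_le_right _ _)).le) ?_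
      simpa [one_div] using tendsto_one_div_add_atTop_nhds_zero_nat (𝕜 := ℝ)
    have hptw : ∀ w, Tendsto (fun n => ENNReal.ofReal (g w * f₂ (t n) w)) atTop
        (𝓝 (ENNReal.ofReal (g w * f₂ t₀ w))) := by
      intro w
      have h1 : Tendsto (fun n => Real.log (f₂ (t n) w)) atTop (𝓝 (Real.log (f₂ t₀ w))) :=
        ((hf₂cont w t₀ ht₀).tendsto).comp htt
      have h3 := (Real.continuous_exp.tendsto _).comp h1
      simp only [Function.comp_def] at h3
      rw [Real.exp_log (hf₂pos t₀ ht₀ w)] at h3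
      have h2 : Tendsto (fun n => f₂ (t n) w) atTop (𝓝 (f₂ t₀ w)) :=
        h3.congr fun n => Real.exp_log (hf₂pos (t n) (htΘ n) w)
      exact (ENNReal.continuous_ofReal.tendsto _).comp (tendsto_const_nhds.mul h2)
    have hlim : Fn t₀ ≤ C := by
      have h4 : Fn t₀ = ∫⁻ w, liminf (fun n => ENNReal.ofReal (g w * f₂ (t n) w)) atTop ∂ν :=
        lintegral_congr fun w => ((hptw w).liminf_eq).symm
      rw [h4]
      refine (lintegral_liminf_le fun n => hmeasFn (t n)).trans ?_
      refine (Filter.liminf_le_liminf (Filter.Eventually.of_forall fun n => htle n)).trans ?_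
      simp
    rw [hFn] at hlim
    simp only at hlim
    rw [hF] at hlim
    exact ENNReal.ofReal_ne_top (top_le_iff.1 hlim)
  obtain ⟨δ₄, hδ₄pos, hδ₄le, hδ₄⟩ := key
  refine ⟨δ₄, hδ₄pos, fun x hx => hδ₂ (ball_subset_ball (hδ₄le.trans (min_le_right _ _)) hx), ?_⟩
  intro s hs
  by_contra hne
  have hsΘ : s ∈ Θ := hδ₂ (ball_subset_ball (hδ₄le.trans (min_le_right _ _)) hs)
  have hnle := hδ₄ s hs
  have hFs : Fn s ≠ ⊤ := hne
  have hBs := hBF s hsΘ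
  have hFs0 : Fn s ≠ 0 := by
    intro h0
    exact hnle (h0 ▸ (zero_le : (0 : ℝ≥0∞) ≤ C))
  have hBpos : 0 < B s := by
    rw [hBs]; exact ENNReal.toReal_pos hFs0 hFs
  have hlt : dist s t₀ < δ₁ := (mem_ball.1 hs).trans_le (hδ₄le.trans (min_le_left _ _))
  have habs : |Real.log (B s)| < 1 := by
    have h5 := hδ₁ hlt
    rwa [Real.dist_eq, hB0, sub_zero] at h5
  have hBlt : B s < Real.exp 2 := by
    have h1 : Real.log (B s) < 2 := (lt_of_abs_lt habs).trans one_lt_two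
    have h2 := Real.exp_lt_exp.2 h1
    rwa [Real.exp_log hBpos] at h2
  exact hnle (by
    rw [← ENNReal.ofReal_toReal hFs, ← hBs]
    exact ENNReal.ofReal_le_ofReal hBlt.le)

set_option maxHeartbeats 2000000 in
/-- Two-level hierarchical model `y | w ∼ f₁(y|w)`, `w | θ ∼ f₂(w|θ)`, where the top-level
conditional density `f₁` does not depend on `θ`. With marginal `fY(θ, y) = ∫ f₁ f₂ dν`,
complete conditional `f(w|y,θ) = f₁ f₂ / fY`, Fisher informations
`Iy θ = ∫ (−∂²_θ log fY) fY dμ`, `Iw θ = ∫ (−∂²_θ log f₂) f₂ dν` and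
`Ewy θ = E_y[I_w(θ|y)]`, one has `Iy = Iw − Ewy` on `Θ`; in particular, if moreover
`Ewy ≥ 0` and `Iy ≥ 0` on `Θ`, then `0 ≤ Iy ≤ Iw` on `Θ`, and if the Jeffreys prior
`√Iw` of the latent-variable model is integrable over `Θ` then so is the Jeffreys
prior `√Iy` of the marginal model. -/
theorem hierarchical_fisher_corollary
    {Y W : Type*} [MeasurableSpace Y] [MeasurableSpace W]
    (μ : Measure Y) (ν : Measure W) [SigmaFinite μ] [SigmaFinite ν]
    (Θ : Set ℝ) (hΘ : IsOpen Θ)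
    (f₁ : Y → W → ℝ) (f₂ : ℝ → W → ℝ)
    (hf₁meas : Measurable (fun z : Y × W => f₁ z.1 z.2))
    (hf₂meas : ∀ θ, Measurable (f₂ θ))
    (hf₁pos : ∀ y w, 0 < f₁ y w)
    (hf₂pos : ∀ θ ∈ Θ, ∀ w, 0 < f₂ θ w)
    (hf₁prob : ∀ w, ∫⁻ y, ENNReal.ofReal (f₁ y w) ∂μ = 1)
    (hf₂prob : ∀ θ ∈ Θ, ∫⁻ w, ENNReal.ofReal (f₂ θ w) ∂ν = 1)
    (hf₂diff : ∀ w, ∀ θ ∈ Θ, DifferentiableAt ℝ (fun t => Real.log (f₂ t w)) θ ∧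
        DifferentiableAt ℝ (deriv fun t => Real.log (f₂ t w)) θ)
    (fY : ℝ → Y → ℝ) (hfY : ∀ θ y, fY θ y = ∫ w, f₁ y w * f₂ θ w ∂ν)
    (hfYdiff : ∀ y, ∀ θ ∈ Θ, DifferentiableAt ℝ (fun t => Real.log (fY t y)) θ ∧
        DifferentiableAt ℝ (deriv fun t => Real.log (fY t y)) θ)
    (Iy Iw Ewy : ℝ → ℝ)
    (hIy : ∀ θ, Iy θ = ∫ y, (-(deriv (deriv fun t => Real.log (fY t y)) θ)) * fY θ y ∂μ)
    (hIw : ∀ θ, Iw θ = ∫ w, (-(deriv (deriv fun t => Real.log (f₂ t w)) θ)) * f₂ θ w ∂ν)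
    (hEwy : ∀ θ, Ewy θ = ∫ y, (∫ w,
        (-(deriv (deriv fun t => Real.log (f₁ y w * f₂ t w / fY t y)) θ))
          * (f₁ y w * f₂ θ w / fY θ y) ∂ν) * fY θ y ∂μ)
    -- integrability (validity of the interchanges of integrals)
    (hint_w : ∀ θ ∈ Θ, Integrable (fun z : Y × W =>
        (-(deriv (deriv fun t => Real.log (f₂ t z.2)) θ)) * (f₁ z.1 z.2 * f₂ θ z.2)) (μ.prod ν))
    (hint_y : ∀ θ ∈ Θ, Integrable (fun z : Y × W =>
        (-(deriv (deriv fun t => Real.log (fY t z.1)) θ)) * (f₁ z.1 z.2 * f₂ θ z.2)) (μ.prod ν))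
    (hint_wy : ∀ θ ∈ Θ, Integrable (fun z : Y × W =>
        (-(deriv (deriv fun t => Real.log (f₁ z.1 z.2 * f₂ t z.2 / fY t z.1)) θ))
          * (f₁ z.1 z.2 * f₂ θ z.2)) (μ.prod ν)) :
    (∀ θ ∈ Θ, Iy θ = Iw θ - Ewy θ)
    ∧ ((∀ θ ∈ Θ, 0 ≤ Ewy θ) → (∀ θ ∈ Θ, 0 ≤ Iy θ) →
        (∀ θ ∈ Θ, 0 ≤ Iy θ ∧ Iy θ ≤ Iw θ)
        ∧ (IntegrableOn (fun θ => Real.sqrt (Iw θ)) Θ volume →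
            IntegrableOn (fun θ => Real.sqrt (Iy θ)) Θ volume)) := by
  classical
  set F : ℝ → Y → ℝ≥0∞ := fun t y => ∫⁻ w, ENNReal.ofReal (f₁ y w * f₂ t w) ∂ν with hFdef
  have hf₁sec : ∀ w, Measurable fun y => f₁ y w :=
    fun w => hf₁meas.comp (measurable_id.prodMk measurable_const)
  have hf₁sec' : ∀ y, Measurable fun w => f₁ y w :=
    fun y => hf₁meas.comp (measurable_const.prodMk measurable_id)
  have hjmeas : ∀ t, Measurable fun z : Y × W => ENNReal.ofReal (f₁ z.1 z.2 * f₂ t z.2) :=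
    fun t => (hf₁meas.mul ((hf₂meas t).comp measurable_snd)).ennreal_ofReal
  have hFmeas : ∀ t, Measurable fun y => F t y := fun t => (hjmeas t).lintegral_prod_right'
  set r : ℕ → ℝ := fun n => ((Denumerable.ofNat ℚ n : ℚ) : ℝ) with hrdef
  have hrsur : ∀ q : ℚ, ∃ n : ℕ, r n = (q : ℝ) :=
    fun q => ⟨@Encodable.encode ℚ Denumerable.toEncodable q, by
      simp only [hrdef]
      exact congrArg (fun p : ℚ => (p : ℝ)) (Denumerable.ofNat_encode q)⟩
  have hrdense : ∀ (x δ : ℝ), 0 < δ → ∃ n, r n ≠ x ∧ |r n - x| < δ := by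
    intro x δ hδ
    obtain ⟨q, hq1, hq2⟩ := exists_rat_btwn (lt_add_of_pos_right x hδ)
    obtain ⟨n, hn⟩ := hrsur q
    refine ⟨n, ?_, ?_⟩
    · rw [hn]; exact ne_of_gt hq1
    · rw [hn, abs_of_pos (by linarith)]; linarith
  set GY : Set Y := {y | ∀ n, r n ∈ Θ → F (r n) y ≠ ⊤} with hGYdef
  have hFone : ∀ t ∈ Θ, ∫⁻ y, F t y ∂μ = 1 := by
    intro t ht
    simp only [hFdef]
    rw [lintegral_lintegral_swap (hjmeas t).aemeasurable]
    have h1 : ∀ w, ∫⁻ y, ENNReal.ofReal (f₁ y w * f₂ t w) ∂μ = ENNReal.ofReal (f₂ t w) := by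
      intro w
      have h2 : ∀ y, ENNReal.ofReal (f₁ y w * f₂ t w)
          = ENNReal.ofReal (f₁ y w) * ENNReal.ofReal (f₂ t w) :=
        fun y => ENNReal.ofReal_mul (hf₁pos y w).le
      simp_rw [h2]
      rw [lintegral_mul_const _ (hf₁sec w).ennreal_ofReal, hf₁prob w, one_mul]
    simp_rw [h1]
    exact hf₂prob t ht
  have hGYae : ∀ᵐ y ∂μ, y ∈ GY := by
    have h : ∀ n : ℕ, ∀ᵐ y ∂μ, (r n ∈ Θ → F (r n) y ≠ ⊤) := by
      intro n
      by_cases hn : r n ∈ Θ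
      · filter_upwards [ae_lt_top (hFmeas (r n))
          (by rw [hFone _ hn]; exact ENNReal.one_ne_top)] with y hy
        exact fun _ => hy.ne
      · exact Filter.Eventually.of_forall fun y h' => absurd h' hn
    filter_upwards [ae_all_iff.2 h] with y hy
    exact hy
  have hGood : ∀ y ∈ GY, ∀ t ∈ Θ, F t y ≠ ⊤ := by
    intro y hy t ht htop
    obtain ⟨δ, hδpos, hball, hb⟩ := aux_blowup ν Θ hΘ (fun w => f₁ y w) (hf₁pos y) (hf₁sec' y)
      f₂ hf₂meas hf₂pos (fun w s hs => (hf₂diff w s hs).1.continuousAt)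
      (fun t => fY t y) (fun t => hfY t y) t ht ((hfYdiff y t ht).1.continuousAt) htop
    obtain ⟨n, hne, hdist⟩ := hrdense t δ hδpos
    have hmem : r n ∈ ball t δ := by rw [mem_ball, Real.dist_eq]; exact hdist
    exact hy n (hball hmem) (hb (r n) hmem)
  have hfYtoReal : ∀ t ∈ Θ, ∀ y, fY t y = (F t y).toReal := by
    intro t ht y
    rw [hfY t y, integral_eq_lintegral_of_nonneg_ae
      (Filter.Eventually.of_forall fun w => (mul_pos (hf₁pos y w) (hf₂pos t ht w)).le)
      ((hf₁sec' y).mul (hf₂meas t)).aestronglyMeasurable]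
  have hfYpos : ∀ y ∈ GY, ∀ t ∈ Θ, 0 < fY t y := by
    intro y hy t ht
    rw [hfYtoReal t ht y]
    refine ENNReal.toReal_pos ?_ (hGood y hy t ht)
    have hpos : 0 < F t y := by
      simp only [hFdef]
      rw [lintegral_pos_iff_support (f := fun w => ENNReal.ofReal (f₁ y w * f₂ t w)) ((hf₁sec' y).mul (hf₂meas t)).ennreal_ofReal]
      have hsupp : Function.support (fun w => ENNReal.ofReal (f₁ y w * f₂ t w)) = Set.univ := by
        ext w
        simp only [Function.mem_support, Set.mem_univ, iff_true, ne_eq, ENNReal.ofReal_eq_zero,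
          not_le]
        exact mul_pos (hf₁pos y w) (hf₂pos t ht w)
      rw [hsupp]
      refine MeasureTheory.Measure.measure_univ_pos.2 ?_
      intro h0
      have h1 := hf₂prob t ht
      rw [h0] at h1
      simp at h1
    exact hpos.ne'
  have key : ∀ θ ∈ Θ, Ewy θ = Iw θ - Iy θ := by
    intro θ hθ
    have hD : ∀ y ∈ GY, ∀ w,
        deriv (deriv fun t => Real.log (f₁ y w * f₂ t w / fY t y)) θ
          = deriv (deriv fun t => Real.log (f₂ t w)) θ
            - deriv (deriv fun t => Real.log (fY t y)) θ := by
      intro y hy w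
      have hder1 : ∀ t ∈ Θ, deriv (fun s => Real.log (f₁ y w * f₂ s w / fY s y)) t
          = deriv (fun s => Real.log (f₂ s w)) t - deriv (fun s => Real.log (fY s y)) t := by
        intro t ht
        have heq : (fun s => Real.log (f₁ y w * f₂ s w / fY s y)) =ᶠ[nhds t]
            fun s => Real.log (f₁ y w) + (Real.log (f₂ s w) - Real.log (fY s y)) := by
          filter_upwards [hΘ.mem_nhds ht] with s hs
          rw [Real.log_div (mul_pos (hf₁pos y w) (hf₂pos s hs w)).ne' (hfYpos y hy s hs).ne',
            Real.log_mul (hf₁pos y w).ne' (hf₂pos s hs w).ne']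
          ring
        rw [heq.deriv_eq, deriv_const_add]
        exact deriv_sub (hf₂diff w t ht).1 (hfYdiff y t ht).1
      have heq2 : (deriv fun s => Real.log (f₁ y w * f₂ s w / fY s y)) =ᶠ[nhds θ]
          fun t => deriv (fun s => Real.log (f₂ s w)) t - deriv (fun s => Real.log (fY s y)) t := by
        filter_upwards [hΘ.mem_nhds hθ] with t ht using hder1 t ht
      rw [heq2.deriv_eq]
      exact deriv_sub (hf₂diff w θ hθ).2 (hfYdiff y θ hθ).2
    have hf₁one : ∀ w, ∫ y, f₁ y w ∂μ = 1 := by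
      intro w
      rw [integral_eq_lintegral_of_nonneg_ae (Filter.Eventually.of_forall fun y => (hf₁pos y w).le)
        (hf₁sec w).aestronglyMeasurable, hf₁prob w]
      simp
    have hM1 : ∫ z : Y × W, (-(deriv (deriv fun t => Real.log (f₂ t z.2)) θ))
        * (f₁ z.1 z.2 * f₂ θ z.2) ∂(μ.prod ν) = Iw θ := by
      rw [integral_prod_symm _ (hint_w θ hθ), hIw θ]
      refine integral_congr_ae (Filter.Eventually.of_forall fun w => ?_)
      have h3 : ∀ y, (-(deriv (deriv fun t => Real.log (f₂ t w)) θ)) * (f₁ y w * f₂ θ w)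
          = ((-(deriv (deriv fun t => Real.log (f₂ t w)) θ)) * f₂ θ w) * f₁ y w :=
        fun y => by ring
      simp_rw [h3]
      rw [integral_const_mul, hf₁one w, mul_one]
    have hM2 : ∫ z : Y × W, (-(deriv (deriv fun t => Real.log (fY t z.1)) θ))
        * (f₁ z.1 z.2 * f₂ θ z.2) ∂(μ.prod ν) = Iy θ := by
      rw [integral_prod _ (hint_y θ hθ), hIy θ]
      refine integral_congr_ae (Filter.Eventually.of_forall fun y => ?_)
      have h5 : ∫ w, (-(deriv (deriv fun t => Real.log (fY t y)) θ)) * (f₁ y w * f₂ θ w) ∂ν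
          = (-(deriv (deriv fun t => Real.log (fY t y)) θ)) * fY θ y := by
        rw [integral_const_mul, ← hfY θ y]
      exact h5
    have hM3 : Ewy θ = ∫ z : Y × W,
        (-(deriv (deriv fun t => Real.log (f₁ z.1 z.2 * f₂ t z.2 / fY t z.1)) θ))
          * (f₁ z.1 z.2 * f₂ θ z.2) ∂(μ.prod ν) := by
      rw [hEwy θ, integral_prod _ (hint_wy θ hθ)]
      refine integral_congr_ae ?_
      filter_upwards [hGYae] with y hy
      have hc : fY θ y ≠ 0 := (hfYpos y hy θ hθ).ne'
      have h4 : ∀ w : W, (-(deriv (deriv fun t => Real.log (f₁ y w * f₂ t w / fY t y)) θ))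
            * (f₁ y w * f₂ θ w / fY θ y)
          = ((-(deriv (deriv fun t => Real.log (f₁ y w * f₂ t w / fY t y)) θ))
            * (f₁ y w * f₂ θ w)) / fY θ y := fun w => by ring
      have h6 : (∫ w, (-(deriv (deriv fun t => Real.log (f₁ y w * f₂ t w / fY t y)) θ))
            * (f₁ y w * f₂ θ w / fY θ y) ∂ν) * fY θ y
          = ∫ w, (-(deriv (deriv fun t => Real.log (f₁ y w * f₂ t w / fY t y)) θ))
            * (f₁ y w * f₂ θ w) ∂ν := by
        simp_rw [h4, integral_div]
        rw [div_mul_cancel₀ _ hc]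
      exact h6
    have hae2 : ∀ᵐ z ∂(μ.prod ν), z.1 ∈ GY := by
      rw [ae_iff]
      refine measure_mono_null (t := GYᶜ ×ˢ (Set.univ : Set W)) (fun z hz => ⟨hz, Set.mem_univ _⟩) ?_
      rw [MeasureTheory.Measure.prod_prod]
      have hμ0 : μ GYᶜ = 0 := ae_iff.1 hGYae
      rw [hμ0, zero_mul]
    have hsplit : ∫ z : Y × W,
        (-(deriv (deriv fun t => Real.log (f₁ z.1 z.2 * f₂ t z.2 / fY t z.1)) θ))
          * (f₁ z.1 z.2 * f₂ θ z.2) ∂(μ.prod ν) = Iw θ - Iy θ := by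
      have hcong : (fun z : Y × W =>
          (-(deriv (deriv fun t => Real.log (f₁ z.1 z.2 * f₂ t z.2 / fY t z.1)) θ))
            * (f₁ z.1 z.2 * f₂ θ z.2))
          =ᵐ[μ.prod ν] fun z : Y × W =>
            ((-(deriv (deriv fun t => Real.log (f₂ t z.2)) θ)) * (f₁ z.1 z.2 * f₂ θ z.2))
              - ((-(deriv (deriv fun t => Real.log (fY t z.1)) θ)) * (f₁ z.1 z.2 * f₂ θ z.2)) := by
        filter_upwards [hae2] with z hz
        rw [hD z.1 hz z.2]
        ring
      rw [integral_congr_ae hcong, integral_sub (hint_w θ hθ) (hint_y θ hθ), hM1, hM2]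
    rw [hM3, hsplit]
  refine ⟨fun θ hθ => by have := key θ hθ; linarith, fun h1 h2 => ?_⟩
  have hbound : ∀ θ ∈ Θ, 0 ≤ Iy θ ∧ Iy θ ≤ Iw θ := by
    intro θ hθ
    have h3 := key θ hθ
    have h4 := h1 θ hθ
    exact ⟨h2 θ hθ, by linarith⟩
  refine ⟨hbound, fun hIntW => ?_⟩
  -- rational approximation machinery
  have hex : ∀ (n : ℕ) (x : ℝ), ∃ k, x ∈ Θ →
      (r k ∈ Θ ∧ r k ≠ x ∧ |r k - x| < (n + 1 : ℝ)⁻¹) := by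
    intro n x
    by_cases hx : x ∈ Θ
    · obtain ⟨δ, hδpos, hball⟩ := Metric.isOpen_iff.1 hΘ x hx
      obtain ⟨k, hk1, hk2⟩ := hrdense x (min δ ((n + 1 : ℝ)⁻¹)) (lt_min hδpos (by positivity))
      refine ⟨k, fun _ => ⟨hball ?_, hk1, hk2.trans_le (min_le_right _ _)⟩⟩
      rw [mem_ball, Real.dist_eq]
      exact hk2.trans_le (min_le_left _ _)
    · exact ⟨0, fun h => absurd h hx⟩
  have hNmeas : ∀ n : ℕ, Measurable fun x => Nat.find (hex n x) := by
    intro n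
    refine measurable_find _ fun k => ?_
    have hset : {x : ℝ | x ∈ Θ → (r k ∈ Θ ∧ r k ≠ x ∧ |r k - x| < (n + 1 : ℝ)⁻¹)}
        = Θᶜ ∪ {x : ℝ | r k ∈ Θ ∧ r k ≠ x ∧ |r k - x| < (n + 1 : ℝ)⁻¹} := by
      ext x
      by_cases hx : x ∈ Θ <;> simp [hx]
    rw [hset]
    refine (hΘ.measurableSet.compl).union ?_
    by_cases hk : r k ∈ Θ
    · have hset2 : {x : ℝ | r k ∈ Θ ∧ r k ≠ x ∧ |r k - x| < (n + 1 : ℝ)⁻¹}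
          = {x : ℝ | r k ≠ x} ∩ {x : ℝ | |r k - x| < (n + 1 : ℝ)⁻¹} := by
        ext x; simp [hk]
      rw [hset2]
      refine MeasurableSet.inter ?_ ?_
      · have : {x : ℝ | r k ≠ x} = {r k}ᶜ := by ext x; simp [eq_comm]
        rw [this]; exact (measurableSet_singleton _).compl
      · exact measurableSet_lt ((continuous_const.sub continuous_id).abs.measurable) measurable_const
    · have hset3 : {x : ℝ | r k ∈ Θ ∧ r k ≠ x ∧ |r k - x| < (n + 1 : ℝ)⁻¹} = ∅ := by
        ext x; simp [hk]
      rw [hset3]; exact MeasurableSet.empty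
  have hNspec : ∀ (n : ℕ) (x : ℝ), x ∈ Θ →
      (r (Nat.find (hex n x)) ∈ Θ ∧ r (Nat.find (hex n x)) ≠ x ∧
        |r (Nat.find (hex n x)) - x| < (n + 1 : ℝ)⁻¹) :=
    fun n x => Nat.find_spec (hex n x)
  have hρtendsto : ∀ x ∈ Θ, Filter.Tendsto (fun n => r (Nat.find (hex n x))) atTop (𝓝[≠] x) := by
    intro x hx
    rw [tendsto_nhdsWithin_iff]
    constructor
    · rw [tendsto_iff_dist_tendsto_zero]
      refine squeeze_zero (g := fun n : ℕ => ((n : ℝ) + 1)⁻¹) (fun n => dist_nonneg)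
        (fun n => ?_) ?_
      · rw [Real.dist_eq]
        exact ((hNspec n x hx).2.2).le
      · simpa [one_div] using tendsto_one_div_add_atTop_nhds_zero_nat (𝕜 := ℝ)
    · exact Filter.Eventually.of_forall fun n => Set.mem_compl_singleton_iff.2 (hNspec n x hx).2.1
  have hfYmeas_t : ∀ t, Measurable fun y => fY t y := by
    intro t
    have h1 : StronglyMeasurable fun z : Y × W => f₁ z.1 z.2 * f₂ t z.2 :=
      (hf₁meas.mul ((hf₂meas t).comp measurable_snd)).stronglyMeasurable
    have h2 := h1.integral_prod_right' (ν := ν)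
    have h3 : (fun y => fY t y) = fun y => ∫ w, f₁ y w * f₂ t w ∂ν := funext fun y => hfY t y
    rw [h3]
    exact h2.measurable
  have hder_t : ∀ t ∈ Θ, Measurable fun y => deriv (fun s => Real.log (fY s y)) t := by
    intro t ht
    have hmq : ∀ n : ℕ, Measurable fun y =>
        (Real.log (fY (r (Nat.find (hex n t))) y) - Real.log (fY t y))
          / (r (Nat.find (hex n t)) - t) :=
      fun n => ((hfYmeas_t _).log.sub (hfYmeas_t t).log).div_const _
    refine measurable_of_tendsto_metrizable' atTop hmq (tendsto_pi_nhds.2 fun y => ?_)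
    have hd := ((hfYdiff y t ht).1).hasDerivAt
    rw [hasDerivAt_iff_tendsto_slope] at hd
    have h3 := hd.comp (hρtendsto t ht)
    simp only [Function.comp_def] at h3
    exact h3.congr fun n => slope_def_field _ _ _
  have hg1 : ∀ k : ℕ, Measurable fun y : Y =>
      (if r k ∈ Θ then deriv (fun s => Real.log (fY s y)) (r k) else 0) := by
    intro k
    by_cases hk : r k ∈ Θ
    · simpa [hk] using hder_t (r k) hk
    · simpa [hk] using measurable_const
  have humeas : ∀ n : ℕ, Measurable fun z : ℝ × Y => fY (r (Nat.find (hex n z.1))) z.2 := by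
    intro n
    have hG : Measurable fun p : Y × ℕ => fY (r p.2) p.1 :=
      measurable_from_prod_countable_left fun k => hfYmeas_t (r k)
    have hpair : Measurable fun z : ℝ × Y => (z.2, Nat.find (hex n z.1)) :=
      measurable_snd.prodMk ((hNmeas n).comp measurable_fst)
    have hrfl : (fun z : ℝ × Y => fY (r (Nat.find (hex n z.1))) z.2)
        = ((fun p : Y × ℕ => fY (r p.2) p.1)
            ∘ (fun z : ℝ × Y => (z.2, Nat.find (hex n z.1)))) := rfl
    rw [hrfl]
    exact hG.comp hpair
  have hvmeas : ∀ n : ℕ, Measurable fun z : ℝ × Y =>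
      (if r (Nat.find (hex n z.1)) ∈ Θ then
        deriv (fun s => Real.log (fY s z.2)) (r (Nat.find (hex n z.1))) else 0) := by
    intro n
    have hG : Measurable fun p : Y × ℕ =>
        (if r p.2 ∈ Θ then deriv (fun s => Real.log (fY s p.1)) (r p.2) else 0) :=
      measurable_from_prod_countable_left fun k => hg1 k
    have hpair : Measurable fun z : ℝ × Y => (z.2, Nat.find (hex n z.1)) :=
      measurable_snd.prodMk ((hNmeas n).comp measurable_fst)
    have hrfl : (fun z : ℝ × Y =>
        (if r (Nat.find (hex n z.1)) ∈ Θ then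
          deriv (fun s => Real.log (fY s z.2)) (r (Nat.find (hex n z.1))) else 0))
        = ((fun p : Y × ℕ =>
            (if r p.2 ∈ Θ then deriv (fun s => Real.log (fY s p.1)) (r p.2) else 0))
          ∘ (fun z : ℝ × Y => (z.2, Nat.find (hex n z.1)))) := rfl
    rw [hrfl]
    exact hG.comp hpair
  set P : Measure (ℝ × Y) := (volume.restrict Θ).prod μ with hPdef
  have haeΘ : ∀ᵐ z ∂P, z.1 ∈ Θ := by
    rw [ae_iff]
    refine measure_mono_null (t := Θᶜ ×ˢ (Set.univ : Set Y))
      (fun z hz => ⟨hz, Set.mem_univ _⟩) ?_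
    rw [MeasureTheory.Measure.prod_prod, Measure.restrict_apply hΘ.measurableSet.compl]
    simp
  have haeG : ∀ᵐ z ∂P, z.2 ∈ GY := by
    rw [ae_iff]
    refine measure_mono_null (t := (Set.univ : Set ℝ) ×ˢ GYᶜ)
      (fun z hz => ⟨Set.mem_univ _, hz⟩) ?_
    rw [MeasureTheory.Measure.prod_prod]
    have hμ0 : μ GYᶜ = 0 := ae_iff.1 hGYae
    rw [hμ0, mul_zero]
  have hfYJ : AEMeasurable (fun z : ℝ × Y => fY z.1 z.2) P := by
    refine aemeasurable_of_tendsto_metrizable_ae'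
      (f := fun n (z : ℝ × Y) => fY (r (Nat.find (hex n z.1))) z.2)
      (fun n => (humeas n).aemeasurable) ?_
    filter_upwards [haeΘ, haeG] with z hz1 hz2
    have hcontL : ContinuousAt (fun s => Real.log (fY s z.2)) z.1 :=
      (hfYdiff z.2 z.1 hz1).1.continuousAt
    have htρ : Filter.Tendsto (fun n => r (Nat.find (hex n z.1))) atTop (𝓝 z.1) :=
      (hρtendsto z.1 hz1).mono_right nhdsWithin_le_nhds
    have h1 : Filter.Tendsto (fun n => Real.log (fY (r (Nat.find (hex n z.1))) z.2)) atTop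
        (𝓝 (Real.log (fY z.1 z.2))) := (hcontL.tendsto).comp htρ
    have h2 := (Real.continuous_exp.tendsto _).comp h1
    simp only [Function.comp_def] at h2
    rw [Real.exp_log (hfYpos z.2 hz2 z.1 hz1)] at h2
    exact h2.congr fun n => Real.exp_log (hfYpos z.2 hz2 _ (hNspec n z.1 hz1).1)
  have hdenm : ∀ n : ℕ, Measurable fun z : ℝ × Y => r (Nat.find (hex n z.1)) - z.1 := by
    intro n
    have hrfl : (fun z : ℝ × Y => r (Nat.find (hex n z.1)))
        = (r ∘ ((fun x => Nat.find (hex n x)) ∘ Prod.fst)) := rfl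
    have h1 : Measurable fun z : ℝ × Y => r (Nat.find (hex n z.1)) := by
      rw [hrfl]
      exact measurable_from_top.comp ((hNmeas n).comp measurable_fst)
    exact h1.sub measurable_fst
  have hd1J : AEMeasurable (fun z : ℝ × Y => deriv (fun s => Real.log (fY s z.2)) z.1) P := by
    refine aemeasurable_of_tendsto_metrizable_ae'
      (f := fun n (z : ℝ × Y) =>
        (Real.log (fY (r (Nat.find (hex n z.1))) z.2) - Real.log (fY z.1 z.2))
          / (r (Nat.find (hex n z.1)) - z.1)) ?_ ?_
    · intro n
      refine AEMeasurable.div ?_ ?_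
      · exact ((Real.measurable_log.comp (humeas n)).aemeasurable.sub
          (Real.measurable_log.comp_aemeasurable hfYJ))
      · exact (hdenm n).aemeasurable
    · filter_upwards [haeΘ] with z hz1
      have hd := ((hfYdiff z.2 z.1 hz1).1).hasDerivAt
      rw [hasDerivAt_iff_tendsto_slope] at hd
      have h3 := hd.comp (hρtendsto z.1 hz1)
      simp only [Function.comp_def] at h3
      exact h3.congr fun n => slope_def_field _ _ _
  have hd2J : AEMeasurable
      (fun z : ℝ × Y => deriv (deriv fun s => Real.log (fY s z.2)) z.1) P := by
    refine aemeasurable_of_tendsto_metrizable_ae'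
      (f := fun n (z : ℝ × Y) =>
        ((if r (Nat.find (hex n z.1)) ∈ Θ then
            deriv (fun s => Real.log (fY s z.2)) (r (Nat.find (hex n z.1))) else 0)
          - deriv (fun s => Real.log (fY s z.2)) z.1) / (r (Nat.find (hex n z.1)) - z.1)) ?_ ?_
    · intro n
      exact AEMeasurable.div (((hvmeas n).aemeasurable).sub hd1J) (hdenm n).aemeasurable
    · filter_upwards [haeΘ] with z hz1
      have hd := ((hfYdiff z.2 z.1 hz1).2).hasDerivAt
      rw [hasDerivAt_iff_tendsto_slope] at hd
      have h3 := hd.comp (hρtendsto z.1 hz1)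
      simp only [Function.comp_def] at h3
      refine h3.congr fun n => ?_
      rw [slope_def_field, if_pos (hNspec n z.1 hz1).1]
  have hIyASM : AEStronglyMeasurable (fun x : ℝ => Iy x) (volume.restrict Θ) := by
    have he : AEStronglyMeasurable (fun z : ℝ × Y =>
        (-(deriv (deriv fun t => Real.log (fY t z.2)) z.1)) * fY z.1 z.2) P :=
      ((hd2J.neg).mul hfYJ).aestronglyMeasurable
    have h2 := he.integral_prod_right'
    have h3 : (fun x : ℝ => Iy x)
        = fun x => ∫ y, (-(deriv (deriv fun t => Real.log (fY t y)) x)) * fY x y ∂μ :=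
      funext fun x => hIy x
    rw [h3]
    exact h2
  have hboundae : ∀ᵐ x ∂(volume.restrict Θ), ‖Real.sqrt (Iy x)‖ ≤ Real.sqrt (Iw x) := by
    filter_upwards [ae_restrict_mem hΘ.measurableSet] with x hx
    rw [Real.norm_eq_abs, abs_of_nonneg (Real.sqrt_nonneg _)]
    exact Real.sqrt_le_sqrt (hbound x hx).2
  exact Integrable.mono' hIntW (Real.continuous_sqrt.comp_aestronglyMeasurable hIyASM) hboundae
end

section
/- Let n ≥ 2 and let A and B be n × n real symmetric positive semi-definite matrices. Then det(A + B)^{1/2} ≥ det(A)^{1/2} + det(B)^{1/2}. -/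
open Matrix

-- scalar lemma for two variables
lemma aux_two {a b : ℝ} (ha0 : 0 ≤ a) (ha1 : a ≤ 1) (hb0 : 0 ≤ b) (hb1 : b ≤ 1) :
    Real.sqrt (a * b) + Real.sqrt ((1 - a) * (1 - b)) ≤ 1 := by
  rw [Real.sqrt_mul ha0, Real.sqrt_mul (by linarith)]
  nlinarith [Real.sq_sqrt ha0, Real.sq_sqrt hb0, Real.sq_sqrt (by linarith : (0:ℝ) ≤ 1 - a),
    Real.sq_sqrt (by linarith : (0:ℝ) ≤ 1 - b),
    sq_nonneg (Real.sqrt a - Real.sqrt b), sq_nonneg (Real.sqrt (1-a) - Real.sqrt (1-b)),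
    Real.sqrt_nonneg a, Real.sqrt_nonneg b, Real.sqrt_nonneg (1-a), Real.sqrt_nonneg (1-b)]

-- scalar lemma
lemma aux_scalar {n : ℕ} (hn : 2 ≤ n) (lam : Fin n → ℝ) (h0 : ∀ i, 0 ≤ lam i)
    (h1 : ∀ i, lam i ≤ 1) :
    Real.sqrt (∏ i, lam i) + Real.sqrt (∏ i, (1 - lam i)) ≤ 1 := by
  set i0 : Fin n := ⟨0, by omega⟩
  set i1 : Fin n := ⟨1, by omega⟩
  have hne : i0 ≠ i1 := by simp [i0, i1, Fin.ext_iff]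
  have hsub : ({i0, i1} : Finset (Fin n)) ⊆ Finset.univ := Finset.subset_univ _
  have key : ∀ (f : Fin n → ℝ), (∀ i, 0 ≤ f i) → (∀ i, f i ≤ 1) →
      ∏ i, f i ≤ f i0 * f i1 := by
    intro f hf0 hf1
    have := Finset.prod_sdiff (f := f) hsub
    have hle : ∏ i ∈ Finset.univ \ {i0, i1}, f i ≤ 1 :=
      Finset.prod_le_one (fun i _ => hf0 i) (fun i _ => hf1 i)
    have hpair : ∏ i ∈ ({i0, i1} : Finset (Fin n)), f i = f i0 * f i1 :=
      Finset.prod_pair hne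
    have hpos : 0 ≤ f i0 * f i1 := mul_nonneg (hf0 i0) (hf0 i1)
    calc ∏ i, f i = (∏ i ∈ Finset.univ \ {i0, i1}, f i) * (f i0 * f i1) := by
          rw [← hpair, this]
      _ ≤ 1 * (f i0 * f i1) := mul_le_mul_of_nonneg_right hle hpos
      _ = f i0 * f i1 := one_mul _
  have k1 := key lam h0 h1
  have k2 := key (fun i => 1 - lam i)
    (fun i => show (0:ℝ) ≤ 1 - lam i by linarith [h1 i])
    (fun i => show (1:ℝ) - lam i ≤ 1 by linarith [h0 i])
  calc Real.sqrt (∏ i, lam i) + Real.sqrt (∏ i, (1 - lam i))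
      ≤ Real.sqrt (lam i0 * lam i1) + Real.sqrt ((1 - lam i0) * (1 - lam i1)) :=
        add_le_add (Real.sqrt_le_sqrt k1) (Real.sqrt_le_sqrt k2)
    _ ≤ 1 := aux_two (h0 i0) (h1 i0) (h0 i1) (h1 i1)

-- core matrix lemma: A + B = 1
lemma aux_core {n : ℕ} (hn : 2 ≤ n) (A B : Matrix (Fin n) (Fin n) ℝ)
    (hA : A.PosSemidef) (hB : B.PosSemidef) (hAB : A + B = 1) :
    Real.sqrt A.det + Real.sqrt B.det ≤ 1 := by
  have hH := hA.isHermitian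
  set lam := hH.eigenvalues with hlam
  set U : Matrix (Fin n) (Fin n) ℝ := (hH.eigenvectorUnitary : Matrix (Fin n) (Fin n) ℝ) with hU
  have hdiagA : star U * A * U = diagonal (RCLike.ofReal ∘ lam) :=
    by have := hH.conjStarAlgAut_star_eigenvectorUnitary; rwa [Unitary.conjStarAlgAut_star_apply] at this
  have hUU : star U * U = 1 := Unitary.coe_star_mul_self hH.eigenvectorUnitary
  have hdiagB : star U * B * U = diagonal (fun i => 1 - lam i) := by
    have hBeq : B = 1 - A := by rw [← hAB]; abel
    rw [hBeq, mul_sub, sub_mul, mul_one, hUU, hdiagA, ← diagonal_one, diagonal_sub]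
    rfl
  have hBdiagPSD : (diagonal (fun i => 1 - lam i)).PosSemidef := by
    rw [← hdiagB, Matrix.star_eq_conjTranspose]
    exact hB.conjTranspose_mul_mul_same U
  have h1 : ∀ i, lam i ≤ 1 := by
    intro i
    have := (posSemidef_diagonal_iff.mp hBdiagPSD) i
    linarith
  have h0 : ∀ i, 0 ≤ lam i := hA.eigenvalues_nonneg
  have hdetU : det (star U) * det U = 1 := by
    rw [← det_mul, hUU, det_one]
  have hdetA : A.det = ∏ i, lam i := by
    have := hH.det_eq_prod_eigenvalues
    simpa using this
  have hdetB : B.det = ∏ i, (1 - lam i) := by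
    have : det (star U * B * U) = det (diagonal (fun i => 1 - lam i)) := by rw [hdiagB]
    rw [det_mul, det_mul, det_diagonal] at this
    calc B.det = det (star U) * det U * B.det := by rw [hdetU, one_mul]
      _ = det (star U) * B.det * det U := by ring
      _ = ∏ i, (1 - lam i) := this
  rw [hdetA, hdetB]
  exact aux_scalar hn lam h0 h1

/-- For `n ≥ 2` and real symmetric positive semi-definite `n × n` matrices `A` and `B`,
`det(A + B)^(1/2) ≥ det(A)^(1/2) + det(B)^(1/2)`. -/
theorem sqrt_det_add_ge_add_sqrt_det {n : ℕ} (hn : 2 ≤ n)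
    (A B : Matrix (Fin n) (Fin n) ℝ) (hA : A.PosSemidef) (hB : B.PosSemidef) :
    Real.sqrt ((A + B).det) ≥ Real.sqrt A.det + Real.sqrt B.det := by
  by_cases hd : (A + B).det = 0
  · -- degenerate case: both determinants vanish
    obtain ⟨x, hx, hmx⟩ := (Matrix.exists_mulVec_eq_zero_iff).mpr hd
    have hxA : 0 ≤ x ⬝ᵥ (A *ᵥ x) := by simpa using hA.dotProduct_mulVec_nonneg x
    have hxB : 0 ≤ x ⬝ᵥ (B *ᵥ x) := by simpa using hB.dotProduct_mulVec_nonneg x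
    have hsum : x ⬝ᵥ (A *ᵥ x) + x ⬝ᵥ (B *ᵥ x) = 0 := by
      have : (A + B) *ᵥ x = A *ᵥ x + B *ᵥ x := add_mulVec A B x
      rw [← dotProduct_add, ← this, hmx, dotProduct_zero]
    have hA0 : A.det = 0 := by
      apply Matrix.exists_mulVec_eq_zero_iff.mp
      refine ⟨x, hx, ?_⟩
      have : star x ⬝ᵥ (A *ᵥ x) = 0 := by
        simpa using (by linarith : x ⬝ᵥ (A *ᵥ x) = 0)
      exact (hA.dotProduct_mulVec_zero_iff x).mp this
    have hB0 : B.det = 0 := by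
      apply Matrix.exists_mulVec_eq_zero_iff.mp
      refine ⟨x, hx, ?_⟩
      have : star x ⬝ᵥ (B *ᵥ x) = 0 := by
        simpa using (by linarith : x ⬝ᵥ (B *ᵥ x) = 0)
      exact (hB.dotProduct_mulVec_zero_iff x).mp this
    simp [hd, hA0, hB0]
  · -- main case
    have hMps := hA.add hB
    set S := (open scoped MatrixOrder in CFC.sqrt (A + B)) with hSdef
    have hSps : S.PosSemidef := open scoped MatrixOrder in (CFC.sqrt_nonneg (A + B)).posSemidef
    have hSS : S * S = A + B := open scoped MatrixOrder in CFC.sqrt_mul_sqrt_self (A + B) hMps.nonneg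
    have hdS2 : S.det * S.det = (A + B).det := by rw [← det_mul, hSS]
    have hdS : S.det ≠ 0 := fun h => hd (by rw [← hdS2, h, mul_zero])
    have hdSnn : 0 ≤ S.det := by
      rw [hSps.isHermitian.det_eq_prod_eigenvalues]
      exact Finset.prod_nonneg fun i _ => by simpa using hSps.eigenvalues_nonneg i
    have hdSpos : 0 < S.det := lt_of_le_of_ne hdSnn (Ne.symm hdS)
    have hSunit : IsUnit S.det := isUnit_iff_ne_zero.mpr hdS
    have hSinv : S⁻¹.PosSemidef := hSps.inv
    have hSinvH : S⁻¹ᴴ = S⁻¹ := hSinv.isHermitian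
    set A' := S⁻¹ * A * S⁻¹ with hA'def
    set B' := S⁻¹ * B * S⁻¹ with hB'def
    have hA' : A'.PosSemidef := by
      have := hA.conjTranspose_mul_mul_same S⁻¹
      rwa [hSinvH] at this
    have hB' : B'.PosSemidef := by
      have := hB.conjTranspose_mul_mul_same S⁻¹
      rwa [hSinvH] at this
    have hsum : A' + B' = 1 := by
      have : A' + B' = S⁻¹ * (A + B) * S⁻¹ := by
        rw [hA'def, hB'def]; noncomm_ring
      rw [this, ← hSS, ← mul_assoc, Matrix.nonsing_inv_mul S hSunit, one_mul,
        Matrix.mul_nonsing_inv S hSunit]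
    have hdetinv : S⁻¹.det = S.det⁻¹ := by
      rw [Matrix.det_nonsing_inv, Ring.inverse_eq_inv]
    have hdetA' : A'.det = A.det * (S.det⁻¹ * S.det⁻¹) := by
      rw [hA'def, det_mul, det_mul, hdetinv]; ring
    have hdetB' : B'.det = B.det * (S.det⁻¹ * S.det⁻¹) := by
      rw [hB'def, det_mul, det_mul, hdetinv]; ring
    have hcore := aux_core hn A' B' hA' hB' hsum
    rw [hdetA', hdetB'] at hcore
    have hinvsq : (S.det⁻¹ * S.det⁻¹ : ℝ) = (S.det⁻¹)^2 := (sq _).symm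
    have hsqrtmul : ∀ c : ℝ, Real.sqrt (c * (S.det⁻¹ * S.det⁻¹)) = Real.sqrt c * S.det⁻¹ := by
      intro c
      rw [hinvsq, Real.sqrt_mul' c (sq_nonneg _), Real.sqrt_sq (by positivity)]
    rw [hsqrtmul, hsqrtmul] at hcore
    have hsqrtM : Real.sqrt ((A + B).det) = S.det := by
      rw [← hdS2, ← sq, Real.sqrt_sq hdSpos.le]
    rw [ge_iff_le, hsqrtM]
    have := mul_le_mul_of_nonneg_right hcore hdSpos.le
    rwa [one_mul, add_mul, mul_assoc, mul_assoc, inv_mul_cancel₀ hdS, mul_one, mul_one] at this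
end

section
/- (Minkowski determinant inequality.) Let n ≥ 1 and let A and B be n × n real symmetric positive semi-definite matrices. Then det(A + B)^{1/n} ≥ det(A)^{1/n} + det(B)^{1/n}. -/
open Matrix Finset

/-- Mahler's inequality / superadditivity of the geometric mean. -/
lemma mahler_ineq {n : ℕ} (hn : 1 ≤ n) (f g : Fin n → ℝ)
    (hf : ∀ i, 0 ≤ f i) (hg : ∀ i, 0 ≤ g i) :
    (∏ i, f i) ^ ((1 : ℝ) / n) + (∏ i, g i) ^ ((1 : ℝ) / n)
      ≤ (∏ i, (f i + g i)) ^ ((1 : ℝ) / n) := by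
  have hn0 : (0 : ℝ) < n := by exact_mod_cast hn
  have hw : (0 : ℝ) < 1 / n := by positivity
  by_cases hz : ∃ i, f i + g i = 0
  · obtain ⟨i, hi⟩ := hz
    have hfi : f i = 0 := le_antisymm (by linarith [hf i, hg i]) (hf i)
    have hgi : g i = 0 := le_antisymm (by linarith [hf i, hg i]) (hg i)
    have h1 : (∏ j, f j) = 0 := Finset.prod_eq_zero (mem_univ i) hfi
    have h2 : (∏ j, g j) = 0 := Finset.prod_eq_zero (mem_univ i) hgi
    rw [h1, h2, Real.zero_rpow (ne_of_gt hw)]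
    simpa using Real.rpow_nonneg (Finset.prod_nonneg fun j _ => by
      have := hf j; have := hg j; linarith) _
  push_neg at hz
  have hpos : ∀ i, 0 < f i + g i := fun i =>
    lt_of_le_of_ne (by have := hf i; have := hg i; linarith) (Ne.symm (hz i))
  have hP : 0 < ∏ i, (f i + g i) := Finset.prod_pos fun i _ => hpos i
  have hPn : 0 < (∏ i, (f i + g i)) ^ ((1 : ℝ) / n) := Real.rpow_pos_of_pos hP _
  -- apply AM-GM to f/(f+g) and g/(f+g)
  have key : ∀ z : Fin n → ℝ, (∀ i, 0 ≤ z i) →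
      (∏ i, (z i / (f i + g i))) ^ ((1 : ℝ) / n) ≤ (1 / n) * ∑ i, z i / (f i + g i) := by
    intro z hzn
    have := Real.geom_mean_le_arith_mean_weighted Finset.univ (fun _ => 1 / (n : ℝ))
      (fun i => z i / (f i + g i)) (fun i _ => le_of_lt hw)
      (by simp [Finset.card_univ]; field_simp) (fun i _ => div_nonneg (hzn i) (hpos i).le)
    calc (∏ i, (z i / (f i + g i))) ^ ((1 : ℝ) / n)
        = ∏ i, (z i / (f i + g i)) ^ ((1 : ℝ) / n) :=
          (Real.finset_prod_rpow _ _ (fun i _ => div_nonneg (hzn i) (hpos i).le) _).symm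
      _ ≤ ∑ i, (1 / (n : ℝ)) * (z i / (f i + g i)) := this
      _ = (1 / n) * ∑ i, z i / (f i + g i) := by rw [Finset.mul_sum]
  have kf := key f hf
  have kg := key g hg
  have hsum : (1 / (n:ℝ)) * ∑ i, f i / (f i + g i) + (1 / n) * ∑ i, g i / (f i + g i) = 1 := by
    rw [← mul_add, ← Finset.sum_add_distrib]
    have : ∀ i ∈ Finset.univ, f i / (f i + g i) + g i / (f i + g i) = 1 := fun i _ => by
      rw [← add_div, div_self (hz i)]
    rw [Finset.sum_congr rfl this]
    simp [Finset.card_univ]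
    field_simp
  have hq : ∀ z : Fin n → ℝ, (∀ i, 0 ≤ z i) →
      (∏ i, (z i / (f i + g i))) ^ ((1:ℝ)/n)
        = (∏ i, z i) ^ ((1:ℝ)/n) / (∏ i, (f i + g i)) ^ ((1:ℝ)/n) := by
    intro z hzn
    rw [Finset.prod_div_distrib, Real.div_rpow (Finset.prod_nonneg fun i _ => hzn i) hP.le]
  rw [hq f hf] at kf
  rw [hq g hg] at kg
  have := add_le_add kf kg
  rw [hsum, ← add_div, div_le_one hPn] at this
  linarith

open Matrix Finset

lemma psd_det_nonneg {n : ℕ} {A : Matrix (Fin n) (Fin n) ℝ} (hA : A.PosSemidef) :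
    0 ≤ A.det := by
  rw [hA.isHermitian.det_eq_prod_eigenvalues]
  exact Finset.prod_nonneg fun i _ => by simpa using hA.eigenvalues_nonneg i

open scoped MatrixOrder in
lemma minkowski_aux {n : ℕ} (hn : 1 ≤ n) (A B : Matrix (Fin n) (Fin n) ℝ)
    (hA : A.PosSemidef) (hdA : A.det ≠ 0) (hB : B.PosSemidef) :
    A.det ^ ((1:ℝ)/n) + B.det ^ ((1:ℝ)/n) ≤ (A + B).det ^ ((1:ℝ)/n) := by
  set S := CFC.sqrt A with hSdef
  have hS : S.PosSemidef := (CFC.sqrt_nonneg A).posSemidef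
  have hSS : S * S = A := CFC.sqrt_mul_sqrt_self A hA.nonneg
  have hdetS2 : S.det * S.det = A.det := by rw [← det_mul, hSS]
  have hdetS : S.det ≠ 0 := fun h => hdA (by rw [← hdetS2, h, zero_mul])
  have hdApos : 0 < A.det := lt_of_le_of_ne (psd_det_nonneg hA) (Ne.symm hdA)
  have hSinvH : S⁻¹ᴴ = S⁻¹ := by
    rw [conjTranspose_nonsing_inv, hS.isHermitian.eq]
  set C := S⁻¹ * B * S⁻¹ with hCdef
  have hC : C.PosSemidef := by
    have := hB.mul_mul_conjTranspose_same S⁻¹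
    rwa [hSinvH] at this
  have hSinv : S * S⁻¹ = 1 := mul_nonsing_inv S (isUnit_iff_ne_zero.mpr hdetS)
  have hinvS : S⁻¹ * S = 1 := nonsing_inv_mul S (isUnit_iff_ne_zero.mpr hdetS)
  have key : A + B = S * (1 + C) * S := by
    rw [hCdef, mul_add, mul_one, add_mul, hSS]
    congr 1
    symm
    calc S * (S⁻¹ * B * S⁻¹) * S = (S * S⁻¹) * B * (S⁻¹ * S) := by
          noncomm_ring
      _ = B := by rw [hSinv, hinvS, one_mul, mul_one]
  have hdetAB : (A + B).det = A.det * (1 + C).det := by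
    rw [key, det_mul, det_mul, mul_comm S.det, mul_assoc, ← hdetS2]; ring
  have hdetB : B.det = A.det * C.det := by
    have hB' : S * C * S = B := by
      calc S * C * S = (S * S⁻¹) * B * (S⁻¹ * S) := by rw [hCdef]; noncomm_ring
        _ = B := by rw [hSinv, hinvS, one_mul, mul_one]
    rw [← hB', det_mul, det_mul, mul_comm S.det, mul_assoc, ← hdetS2]; ring
  -- eigenvalues of C
  set μ := hC.isHermitian.eigenvalues with hμdef
  have hμ : ∀ i, 0 ≤ μ i := fun i => hC.eigenvalues_nonneg i
  have hdetC : C.det = ∏ i, μ i := by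
    rw [hC.isHermitian.det_eq_prod_eigenvalues]
    norm_num
    rfl
  set V := (hC.isHermitian.eigenvectorUnitary : Matrix (Fin n) (Fin n) ℝ) with hVdef
  have hVV : V * star V = 1 := (Matrix.mem_unitaryGroup_iff).mp hC.isHermitian.eigenvectorUnitary.2
  have hspec : C = V * diagonal (RCLike.ofReal ∘ μ) * star V := hC.isHermitian.spectral_theorem
  have hdet1C : (1 + C).det = ∏ i, (1 + μ i) := by
    have h1 : (1 : Matrix (Fin n) (Fin n) ℝ) + C
        = V * (1 + diagonal (RCLike.ofReal ∘ μ)) * star V := by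
      rw [mul_add, add_mul, ← hspec, mul_one, hVV]
    rw [h1, det_mul_right_comm, hVV, one_mul, ← diagonal_one, diagonal_add, det_diagonal]
    norm_num
  -- put it together
  have hC0 : 0 ≤ C.det := psd_det_nonneg hC
  have hprod1 : 0 ≤ ∏ i, (1 + μ i) := Finset.prod_nonneg fun i _ => by linarith [hμ i]
  have hmahler := mahler_ineq hn (fun _ => (1:ℝ)) μ (fun _ => zero_le_one) hμ
  simp only [Finset.prod_const_one, Real.one_rpow] at hmahler
  have hAlen : (0:ℝ) ≤ A.det ^ ((1:ℝ)/n) := Real.rpow_nonneg hdApos.le _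
  calc A.det ^ ((1:ℝ)/n) + B.det ^ ((1:ℝ)/n)
      = A.det ^ ((1:ℝ)/n) * (1 + C.det ^ ((1:ℝ)/n)) := by
        rw [hdetB, Real.mul_rpow hdApos.le hC0]; ring
    _ ≤ A.det ^ ((1:ℝ)/n) * ((∏ i, (1 + μ i)) ^ ((1:ℝ)/n)) := by
        apply mul_le_mul_of_nonneg_left _ hAlen
        rw [← hdetC] at hmahler
        exact hmahler
    _ = (A + B).det ^ ((1:ℝ)/n) := by
        rw [hdetAB, hdet1C, Real.mul_rpow hdApos.le hprod1]

/-- Minkowski determinant inequality: for `n ≥ 1` and real symmetric positive semi-definite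
`n × n` matrices `A` and `B`, `det(A + B)^(1/n) ≥ det(A)^(1/n) + det(B)^(1/n)`. -/
theorem minkowski_det_inequality {n : ℕ} (hn : 1 ≤ n)
    (A B : Matrix (Fin n) (Fin n) ℝ) (hA : A.PosSemidef) (hB : B.PosSemidef) :
    (A + B).det ^ ((1 : ℝ) / n) ≥ A.det ^ ((1 : ℝ) / n) + B.det ^ ((1 : ℝ) / n) := by
  have hne : (1 : ℝ) / n ≠ 0 := by
    have : (0:ℝ) < n := by exact_mod_cast hn
    positivity
  rcases (psd_det_nonneg hA).eq_or_lt' with hdA | hdA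
  · rcases (psd_det_nonneg hB).eq_or_lt' with hdB | hdB
    · rw [hdA, hdB, Real.zero_rpow hne, add_zero]
      exact Real.rpow_nonneg (psd_det_nonneg (hA.add hB)) _
    · have h := minkowski_aux hn B A hB hdB.ne' hA
      rw [add_comm B A] at h
      rw [ge_iff_le, add_comm]
      exact h
  · exact minkowski_aux hn A B hA hdA.ne' hB
end

section
/- Let g₁ and g₂ be probability densities with respect to a σ-finite measure ν on a measurable space Y, and let θ ∈ (0,1). Then the Fisher information of the two-component mixture f(y|θ) = θ g₁(y) + (1−θ) g₂(y) is bounded by the Fisher information 1/(θ(1−θ)) of the Bernoulli latent model: ∫ (g₁(y) − g₂(y))² / (θ g₁(y) + (1−θ) g₂(y)) dν(y) ≤ 1/(θ(1−θ)), where the integrand is taken to be 0 at points where θ g₁(y) + (1−θ) g₂(y) = 0. -/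
open MeasureTheory

/-- The Fisher information of the two-component mixture `f(y|θ) = θ g₁(y) + (1−θ) g₂(y)`
is bounded by the Fisher information `1/(θ(1−θ))` of the Bernoulli latent model:
`∫ (g₁ − g₂)² / (θ g₁ + (1−θ) g₂) dν ≤ 1/(θ(1−θ))` (the integrand being `0` where the
denominator vanishes — which is the Lean convention for division by zero). -/
theorem two_component_mixture_info_le_bernoulli_info
    {Y : Type*} [MeasurableSpace Y] (ν : Measure Y) [SigmaFinite ν]
    (g₁ g₂ : Y → ℝ) (hg₁m : Measurable g₁) (hg₂m : Measurable g₂)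
    (hg₁nn : ∀ y, 0 ≤ g₁ y) (hg₂nn : ∀ y, 0 ≤ g₂ y)
    (hg₁1 : ∫⁻ y, ENNReal.ofReal (g₁ y) ∂ν = 1)
    (hg₂1 : ∫⁻ y, ENNReal.ofReal (g₂ y) ∂ν = 1)
    {θ : ℝ} (hθ : θ ∈ Set.Ioo (0 : ℝ) 1) :
    ∫⁻ y, ENNReal.ofReal ((g₁ y - g₂ y) ^ 2 / (θ * g₁ y + (1 - θ) * g₂ y)) ∂ν
      ≤ ENNReal.ofReal (1 / (θ * (1 - θ))) := by
  obtain ⟨hθ0, hθ1⟩ := hθ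
  have hθ1' : 0 < 1 - θ := by linarith
  have hc : 0 < θ * (1 - θ) := mul_pos hθ0 hθ1'
  -- pointwise bound
  have key : ∀ y, (g₁ y - g₂ y) ^ 2 / (θ * g₁ y + (1 - θ) * g₂ y)
      ≤ 1 / (θ * (1 - θ)) * ((1 - θ) * g₁ y + θ * g₂ y) := by
    intro y
    set a := g₁ y with ha
    set b := g₂ y with hb
    have hA : 0 ≤ a := hg₁nn y
    have hB : 0 ≤ b := hg₂nn y
    rcases eq_or_lt_of_le (by positivity : (0:ℝ) ≤ θ * a + (1 - θ) * b) with h0 | hpos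
    · have ha0 : a = 0 := by nlinarith [mul_nonneg hθ0.le hA, mul_nonneg hθ1'.le hB]
      have hb0 : b = 0 := by nlinarith [mul_nonneg hθ0.le hA, mul_nonneg hθ1'.le hB]
      simp [ha0, hb0]
    · rw [div_le_iff₀ hpos]
      have hab : 0 ≤ a * b := mul_nonneg hA hB
      have : θ * (1 - θ) * (a - b) ^ 2 ≤ ((1 - θ) * a + θ * b) * (θ * a + (1 - θ) * b) := by
        nlinarith [sq_nonneg (a - b), sq_nonneg (a + b)]
      rw [one_div, inv_mul_eq_div, div_mul_eq_mul_div, le_div_iff₀ hc]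
      nlinarith [this]
  calc ∫⁻ y, ENNReal.ofReal ((g₁ y - g₂ y) ^ 2 / (θ * g₁ y + (1 - θ) * g₂ y)) ∂ν
      ≤ ∫⁻ y, ENNReal.ofReal (1 / (θ * (1 - θ)) * ((1 - θ) * g₁ y + θ * g₂ y)) ∂ν := by
        exact lintegral_mono fun y => ENNReal.ofReal_le_ofReal (key y)
    _ = ENNReal.ofReal (1 / (θ * (1 - θ))) *
          ∫⁻ y, ENNReal.ofReal ((1 - θ) * g₁ y + θ * g₂ y) ∂ν := by
        rw [← lintegral_const_mul' _ _ ENNReal.ofReal_ne_top]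
        congr 1 with y
        rw [ENNReal.ofReal_mul (one_div_nonneg.mpr hc.le)]
    _ = ENNReal.ofReal (1 / (θ * (1 - θ))) := by
        have : ∫⁻ y, ENNReal.ofReal ((1 - θ) * g₁ y + θ * g₂ y) ∂ν = 1 := by
          have h1 : ∀ y, ENNReal.ofReal ((1 - θ) * g₁ y + θ * g₂ y)
              = ENNReal.ofReal (1 - θ) * ENNReal.ofReal (g₁ y)
                + ENNReal.ofReal θ * ENNReal.ofReal (g₂ y) := by
            intro y
            rw [ENNReal.ofReal_add (mul_nonneg hθ1'.le (hg₁nn y)) (mul_nonneg hθ0.le (hg₂nn y)),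
              ENNReal.ofReal_mul hθ1'.le, ENNReal.ofReal_mul hθ0.le]
          simp_rw [h1]
          rw [lintegral_add_left (f := fun y => ENNReal.ofReal (1 - θ) * ENNReal.ofReal (g₁ y)) ((measurable_const.mul (hg₁m.ennreal_ofReal))),
            lintegral_const_mul' _ _ ENNReal.ofReal_ne_top,
            lintegral_const_mul' _ _ ENNReal.ofReal_ne_top, hg₁1, hg₂1, mul_one, mul_one,
            ← ENNReal.ofReal_add hθ1'.le hθ0.le]
          norm_num
        rw [this, mul_one]
end

section
/- Let g₁ and g₂ be probability densities with respect to a σ-finite measure ν on a measurable space Y. Define I_y(θ) = ∫ (g₁(y) − g₂(y))² / (θ g₁(y) + (1−θ) g₂(y)) dν(y) for θ ∈ (0,1) (integrand taken to be 0 where the denominator vanishes). Then the Jeffreys prior of the two-component mixture model is proper: ∫₀¹ √(I_y(θ)) dθ ≤ ∫₀¹ θ^{−1/2}(1−θ)^{−1/2} dθ = π < ∞. -/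
open MeasureTheory

/-- The real Beta(1/2,1/2) integrand. -/
noncomputable def betaHalfFun (x : ℝ) : ℝ :=
  x ^ (-(1 : ℝ) / 2) * (1 - x) ^ (-(1 : ℝ) / 2)

lemma complex_beta_half_eq_pi :
    Complex.betaIntegral (1 / 2) (1 / 2) = (Real.pi : ℂ) := by
  have h := Complex.Gamma_mul_Gamma_eq_betaIntegral
    (s := 1 / 2) (t := 1 / 2) (by norm_num) (by norm_num)
  rw [Complex.Gamma_one_half_eq] at h
  norm_num at h
  rw [← h, ← Complex.cpow_add _ _ (by exact_mod_cast Real.pi_ne_zero)]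
  norm_num

lemma complex_integrand_eq (x : ℝ) (hx0 : 0 ≤ x) (hx1 : x ≤ 1) :
    (x : ℂ) ^ ((1 / 2 : ℂ) - 1) * ((1 : ℂ) - (x : ℂ)) ^ ((1 / 2 : ℂ) - 1)
      = ((betaHalfFun x : ℝ) : ℂ) := by
  have h1 : ((1 : ℂ) - (x : ℂ)) = ((1 - x : ℝ) : ℂ) := by push_cast; ring
  have he : ((1 / 2 : ℂ) - 1) = ((-(1 : ℝ) / 2 : ℝ) : ℂ) := by push_cast; ring
  rw [h1, he, ← Complex.ofReal_cpow hx0, ← Complex.ofReal_cpow (by linarith),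
    ← Complex.ofReal_mul]
  rfl

lemma betaHalf_integral :
    ∫ x in (0 : ℝ)..1, betaHalfFun x = Real.pi := by
  have hcongr : ∫ x in (0 : ℝ)..1,
      ((x : ℂ) ^ ((1 / 2 : ℂ) - 1) * ((1 : ℂ) - (x : ℂ)) ^ ((1 / 2 : ℂ) - 1))
      = ∫ x in (0 : ℝ)..1, ((betaHalfFun x : ℝ) : ℂ) := by
    apply intervalIntegral.integral_congr
    intro x hx
    rw [Set.uIcc_of_le (by norm_num) ] at hx
    exact complex_integrand_eq x hx.1 hx.2
  have hB : ∫ x in (0 : ℝ)..1,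
      ((x : ℂ) ^ ((1 / 2 : ℂ) - 1) * ((1 : ℂ) - (x : ℂ)) ^ ((1 / 2 : ℂ) - 1))
      = (Real.pi : ℂ) := complex_beta_half_eq_pi
  rw [hcongr, intervalIntegral.integral_ofReal] at hB
  exact_mod_cast hB

lemma betaHalf_integrableOn :
    IntegrableOn betaHalfFun (Set.Ioc (0 : ℝ) 1) := by
  have h := (Complex.betaIntegral_convergent (u := 1 / 2) (v := 1 / 2)
    (by norm_num) (by norm_num)).1
  have h2 : IntegrableOn (fun x : ℝ => ((betaHalfFun x : ℝ) : ℂ))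
      (Set.Ioc (0 : ℝ) 1) := by
    refine h.congr_fun (fun x hx => ?_) measurableSet_Ioc
    exact complex_integrand_eq x hx.1.le hx.2
  have h3 := h2.re
  have he : (fun x : ℝ => RCLike.re ((betaHalfFun x : ℝ) : ℂ)) = betaHalfFun := by
    funext x; simp
  rwa [he] at h3

lemma betaHalf_lintegral :
    ∫⁻ θ in Set.Ioo (0 : ℝ) 1,
        ENNReal.ofReal (θ ^ (-(1 : ℝ) / 2) * (1 - θ) ^ (-(1 : ℝ) / 2))
      = ENNReal.ofReal Real.pi := by
  have hset : (Set.Ioo (0 : ℝ) 1 : Set ℝ) =ᵐ[volume] Set.Ioc (0 : ℝ) 1 :=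
    MeasureTheory.Ioo_ae_eq_Ioc
  have h1 : ∫⁻ θ in Set.Ioo (0 : ℝ) 1, ENNReal.ofReal (betaHalfFun θ)
      = ∫⁻ θ in Set.Ioc (0 : ℝ) 1, ENNReal.ofReal (betaHalfFun θ) := by
    exact setLIntegral_congr hset
  have h2 : ENNReal.ofReal (∫ θ in Set.Ioc (0 : ℝ) 1, betaHalfFun θ)
      = ∫⁻ θ in Set.Ioc (0 : ℝ) 1, ENNReal.ofReal (betaHalfFun θ) := by
    apply ofReal_integral_eq_lintegral_ofReal betaHalf_integrableOn
    refine MeasureTheory.ae_restrict_of_forall_mem measurableSet_Ioc fun x hx => ?_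
    exact mul_nonneg (Real.rpow_nonneg hx.1.le _)
      (Real.rpow_nonneg (by linarith [hx.2]) _)
  have h3 : ∫ θ in Set.Ioc (0 : ℝ) 1, betaHalfFun θ = Real.pi := by
    rw [← betaHalf_integral, intervalIntegral.integral_of_le (by norm_num)]
  calc ∫⁻ θ in Set.Ioo (0 : ℝ) 1,
        ENNReal.ofReal (θ ^ (-(1 : ℝ) / 2) * (1 - θ) ^ (-(1 : ℝ) / 2))
      = ∫⁻ θ in Set.Ioc (0 : ℝ) 1, ENNReal.ofReal (betaHalfFun θ) := h1
    _ = ENNReal.ofReal Real.pi := by rw [← h2, h3]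

lemma mixture_pointwise_bound {θ a b : ℝ} (hθ0 : 0 < θ) (hθ1 : θ < 1)
    (ha : 0 ≤ a) (hb : 0 ≤ b) :
    (a - b) ^ 2 / (θ * a + (1 - θ) * b) ≤ a / θ + b / (1 - θ) := by
  set d := θ * a + (1 - θ) * b with hd
  have hθ1' : 0 < 1 - θ := by linarith
  rcases eq_or_lt_of_le (by positivity : (0 : ℝ) ≤ d) with h0 | h0
  · rw [← h0, div_zero]; positivity
  · rw [div_le_iff₀ h0]
    have e2 : a / θ + b / (1 - θ) = ((1 - θ) * a + θ * b) / (θ * (1 - θ)) := by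
      rw [div_add_div _ _ hθ0.ne' hθ1'.ne']
      congr 1
      ring
    rw [e2, div_mul_eq_mul_div, le_div_iff₀ (by positivity), hd]
    nlinarith [mul_nonneg ha hb]

/-- The Jeffreys prior of the two-component mixture model with known components `g₁, g₂`
is proper: with `I_y(θ) = ∫ (g₁ − g₂)² / (θ g₁ + (1−θ) g₂) dν` (integrand `0` where the
denominator vanishes), one has
`∫₀¹ √(I_y(θ)) dθ ≤ ∫₀¹ θ^(−1/2) (1−θ)^(−1/2) dθ = π < ∞`. -/
theorem two_component_mixture_jeffreys_proper
    {Y : Type*} [MeasurableSpace Y] (ν : Measure Y) [SigmaFinite ν]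
    (g₁ g₂ : Y → ℝ) (hg₁m : Measurable g₁) (hg₂m : Measurable g₂)
    (hg₁nn : ∀ y, 0 ≤ g₁ y) (hg₂nn : ∀ y, 0 ≤ g₂ y)
    (hg₁1 : ∫⁻ y, ENNReal.ofReal (g₁ y) ∂ν = 1)
    (hg₂1 : ∫⁻ y, ENNReal.ofReal (g₂ y) ∂ν = 1)
    (Iy : ℝ → ENNReal)
    (hIy : ∀ θ, Iy θ = ∫⁻ y, ENNReal.ofReal
        ((g₁ y - g₂ y) ^ 2 / (θ * g₁ y + (1 - θ) * g₂ y)) ∂ν) :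
    (∫⁻ θ in Set.Ioo (0 : ℝ) 1, (Iy θ) ^ ((1 : ℝ) / 2)
        ≤ ∫⁻ θ in Set.Ioo (0 : ℝ) 1,
            ENNReal.ofReal (θ ^ (-(1 : ℝ) / 2) * (1 - θ) ^ (-(1 : ℝ) / 2)))
    ∧ (∫⁻ θ in Set.Ioo (0 : ℝ) 1,
          ENNReal.ofReal (θ ^ (-(1 : ℝ) / 2) * (1 - θ) ^ (-(1 : ℝ) / 2)))
        = ENNReal.ofReal Real.pi
    ∧ ENNReal.ofReal Real.pi < ⊤ := by
  refine ⟨?_, betaHalf_lintegral, ENNReal.ofReal_lt_top⟩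
  apply setLIntegral_mono
  · apply Measurable.ennreal_ofReal
    fun_prop
  intro θ hθ
  obtain ⟨hθ0, hθ1⟩ := hθ
  have hθ1' : 0 < 1 - θ := by linarith
  -- Step 1: Iy θ ≤ ofReal (1 / (θ * (1 - θ)))
  have hbound : Iy θ ≤ ENNReal.ofReal (1 / (θ * (1 - θ))) := by
    rw [hIy θ]
    have step1 : ∫⁻ y, ENNReal.ofReal
        ((g₁ y - g₂ y) ^ 2 / (θ * g₁ y + (1 - θ) * g₂ y)) ∂ν
        ≤ ∫⁻ y, (ENNReal.ofReal (1 / θ) * ENNReal.ofReal (g₁ y)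
            + ENNReal.ofReal (1 / (1 - θ)) * ENNReal.ofReal (g₂ y)) ∂ν := by
      apply lintegral_mono
      intro y
      have h := mixture_pointwise_bound hθ0 hθ1 (hg₁nn y) (hg₂nn y)
      calc ENNReal.ofReal ((g₁ y - g₂ y) ^ 2 / (θ * g₁ y + (1 - θ) * g₂ y))
          ≤ ENNReal.ofReal (g₁ y / θ + g₂ y / (1 - θ)) := ENNReal.ofReal_le_ofReal h
        _ = ENNReal.ofReal (1 / θ * g₁ y) + ENNReal.ofReal (1 / (1 - θ) * g₂ y) := by
            rw [← ENNReal.ofReal_add (mul_nonneg (by positivity) (hg₁nn y))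
              (mul_nonneg (by positivity) (hg₂nn y))]
            congr 1
            field_simp
        _ = ENNReal.ofReal (1 / θ) * ENNReal.ofReal (g₁ y)
            + ENNReal.ofReal (1 / (1 - θ)) * ENNReal.ofReal (g₂ y) := by
            rw [ENNReal.ofReal_mul (by positivity : (0:ℝ) ≤ 1/θ),
              ENNReal.ofReal_mul (by positivity : (0:ℝ) ≤ 1/(1-θ))]
    have step2 : ∫⁻ y, (ENNReal.ofReal (1 / θ) * ENNReal.ofReal (g₁ y)
            + ENNReal.ofReal (1 / (1 - θ)) * ENNReal.ofReal (g₂ y)) ∂ν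
        = ENNReal.ofReal (1 / θ) + ENNReal.ofReal (1 / (1 - θ)) := by
      rw [lintegral_add_left ((hg₁m.ennreal_ofReal).const_mul _),
        lintegral_const_mul' _ _ ENNReal.ofReal_ne_top,
        lintegral_const_mul' _ _ ENNReal.ofReal_ne_top, hg₁1, hg₂1, mul_one, mul_one]
    have step3 : ENNReal.ofReal (1 / θ) + ENNReal.ofReal (1 / (1 - θ))
        = ENNReal.ofReal (1 / (θ * (1 - θ))) := by
      rw [← ENNReal.ofReal_add (by positivity) (by positivity)]
      congr 1
      field_simp
      ring
    rw [← step3, ← step2]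
    exact step1
  -- Step 2: take square roots
  have h2 : (Iy θ) ^ ((1 : ℝ) / 2)
      ≤ (ENNReal.ofReal (1 / (θ * (1 - θ)))) ^ ((1 : ℝ) / 2) :=
    ENNReal.rpow_le_rpow hbound (by norm_num)
  refine h2.trans_eq ?_
  rw [ENNReal.ofReal_rpow_of_pos (by positivity)]
  congr 1
  rw [one_div, Real.inv_rpow (by positivity), neg_div, Real.rpow_neg hθ0.le,
    Real.rpow_neg hθ1'.le, ← mul_inv, ← Real.mul_rpow hθ0.le hθ1'.le]
end
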